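/- Second Simplex Pairing Lemma: Let X ⊆ ℝⁿ be finite and in general position, E ⊆ F ⊆ X, and let Q ⊆ X be a simplex such that a sphere including Q and excluding E exists, but no sphere includes Q and excludes F. Then there exists x ∈ F \ E such that (i) the smallest sphere including Q\{x} and excluding E equals the smallest sphere including Q∪{x} and excluding E, and (ii) neither Q\{x} nor Q∪{x} admits a sphere including it and excluding F. -/

import Mathlib

/-- A sphere with center `z` and squared radius `s ≥ 0` includes `Q`, excludes `E`, and has
minimal squared radius among all such spheres. -/
def IsSmallestSphere {n : ℕ} (Q E : Finset (EuclideanSpace ℝ (Fin n)))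
    (z : EuclideanSpace ℝ (Fin n)) (s : ℝ) : Prop :=
  0 ≤ s ∧ (∀ q ∈ Q, dist z q ^ 2 ≤ s) ∧ (∀ e ∈ E, s ≤ dist z e ^ 2) ∧
    ∀ (z' : EuclideanSpace ℝ (Fin n)) (s' : ℝ), 0 ≤ s' →
      (∀ q ∈ Q, dist z' q ^ 2 ≤ s') → (∀ e ∈ E, s' ≤ dist z' e ^ 2) → s ≤ s'

/-- Some sphere includes `Q` and excludes `E`. -/
def SphereExists {n : ℕ} (Q E : Finset (EuclideanSpace ℝ (Fin n))) : Prop :=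
  ∃ (z : EuclideanSpace ℝ (Fin n)) (s : ℝ), 0 ≤ s ∧
    (∀ q ∈ Q, dist z q ^ 2 ≤ s) ∧ ∀ e ∈ E, s ≤ dist z e ^ 2

/-- General position: any at most `n + 1` points of `X` are affinely independent, and no
point of `X` outside such a subset `Q` lies on the smallest circumsphere of `Q`. -/
def GenPos {n : ℕ} (X : Finset (EuclideanSpace ℝ (Fin n))) : Prop :=
  ∀ Q : Finset (EuclideanSpace ℝ (Fin n)), Q ⊆ X → Q.card ≤ n + 1 →
    AffineIndependent ℝ (fun q : (Q : Set (EuclideanSpace ℝ (Fin n))) =>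
      (q : EuclideanSpace ℝ (Fin n))) ∧
    ∀ (z : EuclideanSpace ℝ (Fin n)) (s : ℝ),
      z ∈ affineSpan ℝ (Q : Set (EuclideanSpace ℝ (Fin n))) →
      (∀ q ∈ Q, dist z q ^ 2 = s) → ∀ p ∈ X, p ∉ Q → dist z p ^ 2 ≠ s

open Finset

/-! ### Finitely generated convex cones are closed -/

section ConeSection

variable {V : Type*} [NormedAddCommGroup V] [NormedSpace ℝ V]

/-- The convex cone generated by a finite set of vectors, as a set. -/
def coneOf (G : Finset V) : Set V :=
  {x | ∃ c : V → ℝ, (∀ v, 0 ≤ c v) ∧ ∑ g ∈ G, c g • g = x}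

lemma zero_mem_coneOf (G : Finset V) : (0 : V) ∈ coneOf G :=
  ⟨fun _ => 0, fun _ => le_rfl, by simp⟩

lemma mem_coneOf_of_mem [DecidableEq V] {G : Finset V} {g : V} (hg : g ∈ G) :
    g ∈ coneOf G := by
  refine ⟨fun v => if v = g then 1 else 0, fun v => by by_cases h : v = g <;> simp [h], ?_⟩
  rw [← Finset.add_sum_erase _ _ hg,
    show (fun v => if v = g then (1:ℝ) else 0) g = 1 from if_pos rfl, one_smul,
    Finset.sum_eq_zero, add_zero]
  intro v hv
  rw [show (fun v => if v = g then (1:ℝ) else 0) v = 0 from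
    if_neg (Finset.ne_of_mem_erase hv), zero_smul]

lemma smul_mem_coneOf {G : Finset V} {x : V} (hx : x ∈ coneOf G) {r : ℝ} (hr : 0 ≤ r) :
    r • x ∈ coneOf G := by
  obtain ⟨c, hc, rfl⟩ := hx
  refine ⟨fun v => r * c v, fun v => mul_nonneg hr (hc v), ?_⟩
  rw [Finset.smul_sum]
  exact Finset.sum_congr rfl fun g _ => by rw [mul_smul]

lemma convex_coneOf (G : Finset V) : Convex ℝ (coneOf G) := by
  rintro x ⟨c₁, h₁, rfl⟩ y ⟨c₂, h₂, rfl⟩ a b ha hb _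
  refine ⟨fun v => a * c₁ v + b * c₂ v,
    fun v => add_nonneg (mul_nonneg ha (h₁ v)) (mul_nonneg hb (h₂ v)), ?_⟩
  rw [Finset.smul_sum, Finset.smul_sum, ← Finset.sum_add_distrib]
  exact Finset.sum_congr rfl fun g _ => by rw [add_smul, mul_smul, mul_smul]

variable [FiniteDimensional ℝ V]

lemma isClosed_coneOf_of_linearIndependent {G : Finset V}
    (h : LinearIndependent ℝ ((↑) : {x // x ∈ G} → V)) : IsClosed (coneOf G) := by
  classical
  set T : ({x // x ∈ G} → ℝ) →ₗ[ℝ] V := Fintype.linearCombination ℝ ((↑) : {x // x ∈ G} → V)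
    with hT
  have hTapp : ∀ c : {x // x ∈ G} → ℝ, T c = ∑ i : {x // x ∈ G}, c i • (i : V) := by
    intro c
    simp [hT, Fintype.linearCombination_apply]
  have hker : LinearMap.ker T = ⊥ := by
    rw [LinearMap.ker_eq_bot']
    intro c hc
    rw [hTapp] at hc
    have := Fintype.linearIndependent_iff.mp h c hc
    funext i
    exact this i
  have himg : coneOf G = T '' {c | ∀ i, 0 ≤ c i} := by
    ext x
    constructor
    · rintro ⟨c, hc, rfl⟩
      refine ⟨fun i => c i, fun i => hc _, ?_⟩
      rw [hTapp, ← Finset.sum_coe_sort G (fun g => c g • g)]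
    · rintro ⟨c, hc, rfl⟩
      refine ⟨fun v => if hv : v ∈ G then c ⟨v, hv⟩ else 0, ?_, ?_⟩
      · intro v
        by_cases hv : v ∈ G
        · simpa [hv] using hc ⟨v, hv⟩
        · simp [hv]
      · rw [hTapp, ← Finset.sum_coe_sort G]
        apply Finset.sum_congr rfl
        intro i _
        simp
  rw [himg]
  refine (LinearMap.isClosedEmbedding_of_injective hker).isClosedMap _ ?_
  have : {c : {x // x ∈ G} → ℝ | ∀ i, 0 ≤ c i} = ⋂ i, {c | 0 ≤ c i} := by
    ext c; simp [Set.mem_iInter]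
  rw [this]
  exact isClosed_iInter fun i => isClosed_le continuous_const (continuous_apply i)

lemma coneOf_erase_subset [DecidableEq V] {G : Finset V} {g : V} :
    coneOf (G.erase g) ⊆ coneOf G := by
  rintro x ⟨c, hc, rfl⟩
  by_cases hg : g ∈ G
  · refine ⟨fun v => if v = g then 0 else c v, ?_, ?_⟩
    · intro v; by_cases hv : v = g <;> simp [hv, hc v]
    · rw [← Finset.add_sum_erase _ _ hg]
      rw [show (fun v => if v = g then (0:ℝ) else c v) g = 0 from if_pos rfl, zero_smul, zero_add]
      exact Finset.sum_congr rfl fun v hv => by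
        rw [show (fun v => if v = g then (0:ℝ) else c v) v = c v from
          if_neg (Finset.ne_of_mem_erase hv)]
  · rw [Finset.erase_eq_of_notMem hg]
    exact ⟨c, hc, rfl⟩

lemma isClosed_coneOf_aux [DecidableEq V] :
    ∀ (m : ℕ) (G : Finset V), G.card ≤ m → IsClosed (coneOf G) := by
  intro m
  induction m with
  | zero =>
    intro G hG
    have hG0 : G = ∅ := Finset.card_eq_zero.mp (Nat.le_zero.mp hG)
    subst hG0
    have : IsEmpty {x // x ∈ (∅ : Finset V)} := ⟨fun x => absurd x.2 (Finset.notMem_empty _)⟩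
    exact isClosed_coneOf_of_linearIndependent linearIndependent_empty_type
  | succ m ih =>
    intro G hG
    by_cases h : LinearIndependent ℝ ((↑) : {x // x ∈ G} → V)
    · exact isClosed_coneOf_of_linearIndependent h
    · obtain ⟨a₀, hsum₀, i₀, hi₀⟩ := Fintype.not_linearIndependent_iff.mp h
      obtain ⟨a, hsum, ipos, hipos⟩ :
          ∃ a : {x // x ∈ G} → ℝ, ∑ i, a i • (i : V) = 0 ∧ ∃ i, 0 < a i := by
        rcases hi₀.lt_or_gt with hneg | hpos
        · refine ⟨-a₀, ?_, i₀, by simpa using hneg⟩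
          simp only [Pi.neg_apply, neg_smul, Finset.sum_neg_distrib, hsum₀, neg_zero]
        · exact ⟨a₀, hsum₀, i₀, hpos⟩
      set abar : V → ℝ := fun v => if hv : v ∈ G then a ⟨v, hv⟩ else 0 with habar
      have habar_sum : ∑ g ∈ G, abar g • g = 0 := by
        rw [← Finset.sum_coe_sort G (fun g => abar g • g), ← hsum]
        apply Finset.sum_congr rfl
        intro i _
        simp [habar]
      set S : Finset V := G.filter (fun g => 0 < abar g) with hS
      have hSne : S.Nonempty := by
        refine ⟨(ipos : V), ?_⟩
        rw [hS, Finset.mem_filter]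
        refine ⟨ipos.2, ?_⟩
        simpa [habar, ipos.2] using hipos
      have hSsub : S ⊆ G := Finset.filter_subset _ _
      have hunion : coneOf G = ⋃ g ∈ S, coneOf (G.erase g) := by
        apply Set.Subset.antisymm
        · rintro x ⟨d, hd, rfl⟩
          have himgne : (S.image fun g => d g / abar g).Nonempty := hSne.image _
          set t : ℝ := (S.image fun g => d g / abar g).min' himgne with ht
          obtain ⟨gs, hgsS, hgs⟩ := Finset.mem_image.mp ((S.image _).min'_mem himgne)
          have hgpos : 0 < abar gs := (Finset.mem_filter.mp hgsS).2
          have htnn : 0 ≤ t := by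
            rw [ht, ← hgs]
            exact div_nonneg (hd gs) hgpos.le
          have htle : ∀ g ∈ S, t ≤ d g / abar g := fun g hg =>
            Finset.min'_le _ _ (Finset.mem_image_of_mem _ hg)
          set d' : V → ℝ := fun v => d v - t * abar v with hd'
          have hd'nn : ∀ v, 0 ≤ d' v := by
            intro v
            by_cases hvS : v ∈ S
            · have hpos : 0 < abar v := (Finset.mem_filter.mp hvS).2
              have := htle v hvS
              rw [le_div_iff₀ hpos] at this
              simp only [hd', sub_nonneg]
              linarith
            · have hle : abar v ≤ 0 := by
                by_cases hvG : v ∈ G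
                · by_contra hc
                  exact hvS (Finset.mem_filter.mpr ⟨hvG, lt_of_not_ge hc⟩)
                · simp [habar, hvG]
              have : t * abar v ≤ 0 := mul_nonpos_of_nonneg_of_nonpos htnn hle
              simp only [hd', sub_nonneg]
              linarith [hd v]
          have hd'sum : ∑ g ∈ G, d' g • g = ∑ g ∈ G, d g • g := by
            simp only [hd', sub_smul, mul_smul, Finset.sum_sub_distrib]
            rw [← Finset.smul_sum, habar_sum, smul_zero, sub_zero]
          have hd'gs : d' gs = 0 := by
            have h2 : t * abar gs = d gs := by
              rw [← hgs.trans ht.symm, div_mul_cancel₀ _ (ne_of_gt hgpos)]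
            simp only [hd']
            linarith
          refine Set.mem_biUnion hgsS ⟨d', hd'nn, ?_⟩
          rw [← Finset.add_sum_erase _ (fun g => d' g • g) (hSsub hgsS)] at hd'sum
          rw [hd'gs, zero_smul, zero_add] at hd'sum
          exact hd'sum
        · intro x hx
          obtain ⟨g, _, hxg⟩ := Set.mem_iUnion₂.mp hx
          exact coneOf_erase_subset hxg
      rw [hunion]
      refine Set.Finite.isClosed_biUnion S.finite_toSet ?_
      intro g hg
      apply ih
      have hgG : g ∈ G := hSsub hg
      have := Finset.card_erase_of_mem hgG
      omega

lemma isClosed_coneOf [DecidableEq V] (G : Finset V) : IsClosed (coneOf G) :=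
  isClosed_coneOf_aux G.card G le_rfl

end ConeSection

/-! ### Geometry lemmas -/

noncomputable section SSP

variable {n : ℕ}

local notation "Pt" => EuclideanSpace ℝ (Fin n)

lemma ssp_dist_sq_expand (z p : Pt) :
    dist z p ^ 2 = ‖z‖ ^ 2 - 2 * inner ℝ z p + ‖p‖ ^ 2 := by
  rw [dist_eq_norm, norm_sub_sq_real]

lemma ssp_dist_sq_lerp (z₀ z₁ p : Pt) (t : ℝ) :
    dist ((1 - t) • z₀ + t • z₁) p ^ 2
      = (1 - t) * dist z₀ p ^ 2 + t * dist z₁ p ^ 2 - t * (1 - t) * dist z₀ z₁ ^ 2 := by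
  obtain ⟨a, ha'⟩ : ∃ a, z₀ - p = a := ⟨_, rfl⟩
  obtain ⟨b, hb'⟩ : ∃ b, z₁ - p = b := ⟨_, rfl⟩
  have ha : (1 - t) • z₀ + t • z₁ - p = (1 - t) • a + t • b := by
    rw [← ha', ← hb']
    simp only [smul_sub, sub_smul, one_smul]
    abel
  have hab : z₀ - z₁ = a - b := by rw [← ha', ← hb']; abel
  rw [dist_eq_norm, dist_eq_norm, dist_eq_norm, dist_eq_norm, ha, hab, ha', hb']
  rw [norm_add_sq_real, norm_sub_sq_real, norm_smul, norm_smul,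
    real_inner_smul_left, real_inner_smul_right]
  simp only [Real.norm_eq_abs, mul_pow, sq_abs]
  ring

lemma ssp_dist_sq_lerp' (z₀ z₁ p : Pt) (s₀ s₁ t : ℝ) :
    dist ((1 - t) • z₀ + t • z₁) p ^ 2
        - ((1 - t) * s₀ + t * s₁ - t * (1 - t) * dist z₀ z₁ ^ 2)
      = (1 - t) * (dist z₀ p ^ 2 - s₀) + t * (dist z₁ p ^ 2 - s₁) := by
  rw [ssp_dist_sq_lerp]; ring

lemma ssp_exists_smallest (Q E : Finset (EuclideanSpace ℝ (Fin n))) (hQ : Q.Nonempty)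
    (hE : SphereExists Q E) : ∃ z s, IsSmallestSphere Q E z s := by
  obtain ⟨q₀, hq₀⟩ := hQ
  obtain ⟨z₀, s₀, hs₀, hin₀, hex₀⟩ := hE
  set K : Set ((EuclideanSpace ℝ (Fin n)) × ℝ) :=
    {p | 0 ≤ p.2 ∧ p.2 ≤ s₀ ∧ (∀ q ∈ Q, dist p.1 q ^ 2 ≤ p.2) ∧
      ∀ e ∈ E, p.2 ≤ dist p.1 e ^ 2} with hK
  have hclosed : IsClosed K := by
    have hrw : K = {p : Pt × ℝ | 0 ≤ p.2} ∩ ({p | p.2 ≤ s₀} ∩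
        ((⋂ q ∈ Q, {p : Pt × ℝ | dist p.1 q ^ 2 ≤ p.2}) ∩
          ⋂ e ∈ E, {p : Pt × ℝ | p.2 ≤ dist p.1 e ^ 2})) := by
      ext p
      simp only [hK, Set.mem_setOf_eq, Set.mem_inter_iff, Set.mem_iInter]
    rw [hrw]
    refine (isClosed_le continuous_const continuous_snd).inter
      ((isClosed_le continuous_snd continuous_const).inter (IsClosed.inter ?_ ?_))
    · exact isClosed_biInter fun q _ =>
        isClosed_le ((continuous_fst.dist continuous_const).pow 2) continuous_snd
    · exact isClosed_biInter fun e _ =>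
        isClosed_le continuous_snd ((continuous_fst.dist continuous_const).pow 2)
  have hsub : K ⊆ (Metric.closedBall q₀ (Real.sqrt s₀)) ×ˢ (Set.Icc 0 s₀) := by
    rintro ⟨z, s⟩ ⟨h0, hle, hin, _⟩
    constructor
    · simp only [Metric.mem_closedBall]
      rw [Real.le_sqrt dist_nonneg hs₀]
      exact (hin q₀ hq₀).trans hle
    · exact ⟨h0, hle⟩
  have hcomp : IsCompact K :=
    IsCompact.of_isClosed_subset ((isCompact_closedBall q₀ _).prod isCompact_Icc) hclosed hsub
  have hne : K.Nonempty := ⟨(z₀, s₀), hs₀, le_rfl, hin₀, hex₀⟩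
  obtain ⟨⟨z, s⟩, hmem, hmin⟩ := hcomp.exists_isMinOn hne continuous_snd.continuousOn
  refine ⟨z, s, hmem.1, hmem.2.2.1, hmem.2.2.2, ?_⟩
  intro z' s' h0 hin hex
  by_cases hle : s' ≤ s₀
  · exact hmin (show (z', s') ∈ K from ⟨h0, hle, hin, hex⟩)
  · exact hmem.2.1.trans (not_le.mp hle).le

/-! ### The Farkas certificate -/

/-- The lift of a point to the paraboloid in `Pt × ℝ × ℝ`. -/
def vmap (p : Pt) : Pt × ℝ × ℝ := (p, 1, ‖p‖ ^ 2)

/-- The linear functional on `Pt × ℝ × ℝ` which evaluates, on `vmap p`, to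
`dist z' p ^ 2 - s'`. -/
def Lfun (z' : Pt) (s' : ℝ) : (Pt × ℝ × ℝ) →ₗ[ℝ] ℝ where
  toFun x := x.2.2 - 2 * inner ℝ z' x.1 + (‖z'‖ ^ 2 - s') * x.2.1
  map_add' x y := by
    simp only [Prod.fst_add, Prod.snd_add, inner_add_right]
    ring
  map_smul' c x := by
    simp only [Prod.smul_fst, Prod.smul_snd, inner_smul_right, smul_eq_mul,
      RingHom.id_apply]
    ring

lemma Lfun_vmap (z' : Pt) (s' : ℝ) (p : Pt) :
    Lfun z' s' (vmap p) = dist z' p ^ 2 - s' := by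
  simp only [Lfun, vmap, LinearMap.coe_mk, AddHom.coe_mk]
  rw [ssp_dist_sq_expand z' p]
  ring

lemma ssp_certificate [DecidableEq (EuclideanSpace ℝ (Fin n))]
    (Q F : Finset (EuclideanSpace ℝ (Fin n))) (hQ : Q.Nonempty)
    (hF : ¬ SphereExists Q F) :
    ∃ lam mu : Pt → ℝ, (∀ p, 0 ≤ lam p) ∧ (∀ p, 0 ≤ mu p) ∧
      (∀ p ∈ Q ∩ F, lam p = 0 ∨ mu p = 0) ∧
      ∀ (z' : Pt) (s' : ℝ),
        ∑ q ∈ Q, lam q * (dist z' q ^ 2 - s')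
          - ∑ f ∈ F, mu f * (dist z' f ^ 2 - s') = 1 := by
  classical
  set G : Finset (Pt × ℝ × ℝ) := Q.image vmap ∪ F.image (fun p => -vmap p) with hG
  have htgt : (((0 : Pt), (0 : ℝ), (1 : ℝ))) ∈ coneOf G := by
    by_contra hnot
    obtain ⟨f, u, hfb, hu⟩ :=
      geometric_hahn_banach_closed_point (convex_coneOf G) (isClosed_coneOf G) hnot
    have h0u : (0 : ℝ) < u := by
      have := hfb 0 (zero_mem_coneOf G)
      simpa using this
    have hfle : ∀ y ∈ coneOf G, f y ≤ 0 := by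
      intro y hy
      by_contra hpos
      push_neg at hpos
      have hr : (0 : ℝ) < (u + 1) / f y := div_pos (by linarith) hpos
      have h2 := hfb _ (smul_mem_coneOf hy hr.le)
      rw [map_smul, smul_eq_mul, div_mul_cancel₀ _ (ne_of_gt hpos)] at h2
      linarith
    have hq : ∀ q ∈ Q, f (vmap q) ≤ 0 := fun q hq =>
      hfle _ (mem_coneOf_of_mem (Finset.mem_union_left _ (Finset.mem_image_of_mem _ hq)))
    have hfex : ∀ p ∈ F, 0 ≤ f (vmap p) := by
      intro p hp
      have := hfle _ (mem_coneOf_of_mem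
        (Finset.mem_union_right _ (Finset.mem_image_of_mem (fun p => -vmap p) hp)))
      rw [map_neg] at this
      linarith
    set β : ℝ := f ((0 : Pt), (0 : ℝ), (1 : ℝ)) with hβ
    have hβpos : 0 < β := lt_trans h0u hu
    set α : ℝ := f ((0 : Pt), (1 : ℝ), (0 : ℝ)) with hα
    set f₁ : Pt →L[ℝ] ℝ := f.comp (ContinuousLinearMap.inl ℝ Pt (ℝ × ℝ)) with hf₁
    have hdecomp : ∀ p : Pt, f (vmap p) = f₁ p + α + ‖p‖ ^ 2 * β := by
      intro p
      have hsplit : (vmap p : Pt × ℝ × ℝ)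
          = ((p, 0, 0) : Pt × ℝ × ℝ) + (1 : ℝ) • (((0 : Pt), (1 : ℝ), (0 : ℝ)))
            + (‖p‖ ^ 2 : ℝ) • (((0 : Pt), (0 : ℝ), (1 : ℝ))) := by
        simp [vmap, Prod.ext_iff]
      rw [hsplit, map_add, map_add, map_smul, map_smul]
      simp only [hf₁, ContinuousLinearMap.comp_apply, ContinuousLinearMap.inl_apply,
        smul_eq_mul]
      have hpp : ((p, (0 : ℝ × ℝ)) : Pt × ℝ × ℝ) = ((p, 0, 0) : Pt × ℝ × ℝ) := rfl
      rw [hpp]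
      ring
    set y₀ : Pt := (InnerProductSpace.toDual ℝ Pt).symm f₁ with hy₀
    have hy₀app : ∀ p : Pt, (inner ℝ y₀ p : ℝ) = f₁ p := fun p =>
      InnerProductSpace.toDual_symm_apply
    set z : Pt := (-(1 / (2 * β))) • y₀ with hz
    have hzy : ∀ p : Pt, f₁ p = -2 * β * inner ℝ z p := by
      intro p
      rw [← hy₀app p, hz, real_inner_smul_left]
      field_simp
    have key : ∀ p : Pt, dist z p ^ 2 - (‖z‖ ^ 2 - α / β) = f (vmap p) / β := by
      intro p
      rw [ssp_dist_sq_expand z p, hdecomp p, hzy p]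
      field_simp
      ring
    apply hF
    have hincl : ∀ q ∈ Q, dist z q ^ 2 ≤ ‖z‖ ^ 2 - α / β := by
      intro q hqQ
      have hk := key q
      have h2 : f (vmap q) / β ≤ 0 := div_nonpos_of_nonpos_of_nonneg (hq q hqQ) hβpos.le
      linarith
    have hexcl : ∀ p ∈ F, ‖z‖ ^ 2 - α / β ≤ dist z p ^ 2 := by
      intro p hp
      have hk := key p
      have h2 : 0 ≤ f (vmap p) / β := div_nonneg (hfex p hp) hβpos.le
      linarith
    obtain ⟨q₀, hq₀⟩ := hQ
    exact ⟨z, ‖z‖ ^ 2 - α / β, le_trans (sq_nonneg _) (hincl q₀ hq₀), hincl, hexcl⟩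
  obtain ⟨c, hc, hsum⟩ := htgt
  have hdisjQF : Disjoint (Q.image vmap) (F.image fun p => -vmap p) := by
    rw [Finset.disjoint_left]
    rintro a ha hb
    obtain ⟨q, _, rfl⟩ := Finset.mem_image.mp ha
    obtain ⟨p, _, hp⟩ := Finset.mem_image.mp hb
    have h21 := congrArg (fun v : Pt × ℝ × ℝ => v.2.1) hp
    simp [vmap] at h21
    norm_num at h21
  rw [hG, Finset.sum_union hdisjQF,
    Finset.sum_image (fun x _ y _ h => congrArg Prod.fst h),
    Finset.sum_image (fun x _ y _ (h : -vmap x = -vmap y) =>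
      congrArg Prod.fst (neg_injective h))] at hsum
  set lam₀ : Pt → ℝ := fun p => c (vmap p) with hlam₀
  set mu₀ : Pt → ℝ := fun p => c (-vmap p) with hmu₀
  have hid₀ : ∀ (z' : Pt) (s' : ℝ),
      ∑ q ∈ Q, lam₀ q * (dist z' q ^ 2 - s')
        - ∑ f ∈ F, mu₀ f * (dist z' f ^ 2 - s') = 1 := by
    intro z' s'
    have happ := congrArg (Lfun z' s') hsum
    rw [map_add, map_sum, map_sum] at happ
    have h1 : (Lfun z' s') (((0 : Pt), (0 : ℝ), (1 : ℝ))) = 1 := by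
      simp [Lfun, inner_zero_right]
    rw [h1] at happ
    have h2 : ∀ q ∈ Q, (Lfun z' s') (lam₀ q • vmap q) = lam₀ q * (dist z' q ^ 2 - s') := by
      intro q _
      rw [map_smul, smul_eq_mul, Lfun_vmap]
    have h3 : ∀ p ∈ F, (Lfun z' s') (mu₀ p • -vmap p)
        = -(mu₀ p * (dist z' p ^ 2 - s')) := by
      intro p _
      rw [map_smul, smul_eq_mul, map_neg, Lfun_vmap]
      ring
    rw [Finset.sum_congr rfl h2, Finset.sum_congr rfl h3] at happ
    rw [Finset.sum_neg_distrib] at happ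
    linarith [happ]
  set nu : Pt → ℝ := fun p => if p ∈ Q ∩ F then min (lam₀ p) (mu₀ p) else 0 with hnu
  have hnn₀ : ∀ p, 0 ≤ lam₀ p := fun p => hc _
  have hmm₀ : ∀ p, 0 ≤ mu₀ p := fun p => hc _
  have hQfilter : Q.filter (· ∈ Q ∩ F) = Q ∩ F := by
    rw [Finset.filter_mem_eq_inter, ← Finset.inter_assoc, Finset.inter_self]
  have hFfilter : F.filter (· ∈ Q ∩ F) = Q ∩ F := by
    rw [Finset.filter_mem_eq_inter]
    ext x
    simp only [Finset.mem_inter]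
    tauto
  refine ⟨fun p => lam₀ p - nu p, fun p => mu₀ p - nu p, ?_, ?_, ?_, ?_⟩
  · intro p
    simp only [hnu, sub_nonneg]
    split
    · exact min_le_left _ _
    · exact hnn₀ p
  · intro p
    simp only [hnu, sub_nonneg]
    split
    · exact min_le_right _ _
    · exact hmm₀ p
  · intro p hp
    have hp' := Finset.mem_inter.mp hp
    rcases le_total (lam₀ p) (mu₀ p) with hle | hle
    · left
      simp [hnu, hp'.1, hp'.2, min_eq_left hle]
    · right
      simp [hnu, hp'.1, hp'.2, min_eq_right hle]
  · intro z' s'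
    have hQside : ∑ q ∈ Q, nu q * (dist z' q ^ 2 - s')
        = ∑ p ∈ Q ∩ F, min (lam₀ p) (mu₀ p) * (dist z' p ^ 2 - s') := by
      rw [← hQfilter, Finset.sum_filter]
      apply Finset.sum_congr rfl
      intro q _
      simp only [hnu, ite_mul, zero_mul]
    have hFside : ∑ p ∈ F, nu p * (dist z' p ^ 2 - s')
        = ∑ p ∈ Q ∩ F, min (lam₀ p) (mu₀ p) * (dist z' p ^ 2 - s') := by
      rw [← hFfilter, Finset.sum_filter]
      apply Finset.sum_congr rfl
      intro q _
      simp only [hnu, ite_mul, zero_mul]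
    have e1 : ∑ q ∈ Q, (lam₀ q - nu q) * (dist z' q ^ 2 - s')
        = ∑ q ∈ Q, lam₀ q * (dist z' q ^ 2 - s')
          - ∑ q ∈ Q, nu q * (dist z' q ^ 2 - s') := by
      rw [← Finset.sum_sub_distrib]
      exact Finset.sum_congr rfl fun q _ => by ring
    have e2 : ∑ p ∈ F, (mu₀ p - nu p) * (dist z' p ^ 2 - s')
        = ∑ p ∈ F, mu₀ p * (dist z' p ^ 2 - s')
          - ∑ p ∈ F, nu p * (dist z' p ^ 2 - s') := by
      rw [← Finset.sum_sub_distrib]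
      exact Finset.sum_congr rfl fun q _ => by ring
    simp only []
    rw [e1, e2, hQside, hFside]
    have := hid₀ z' s'
    linarith


end SSP

/-- **Second Simplex Pairing Lemma.**
Let `X` be finite and in general position, `E ⊆ F ⊆ X`, and let `Q ⊆ X` admit a sphere
including `Q` and excluding `E`, but no sphere including `Q` and excluding `F`.  Then
there is `x ∈ F \ E` such that (i) `Q \ {x}` and `Q ∪ {x}` have the same smallest sphere
excluding `E`, and (ii) neither `Q \ {x}` nor `Q ∪ {x}` admits a sphere including it and
excluding `F`. -/
theorem second_simplex_pairing_lemma (n : ℕ)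
    [DecidableEq (EuclideanSpace ℝ (Fin n))]
    (X E F Q : Finset (EuclideanSpace ℝ (Fin n)))
    (hGP : GenPos X) (hEF : E ⊆ F) (hFX : F ⊆ X) (hQX : Q ⊆ X)
    (hE : SphereExists Q E) (hF : ¬ SphereExists Q F) :
    ∃ x ∈ F \ E,
      (∃ (z : EuclideanSpace ℝ (Fin n)) (s : ℝ),
        IsSmallestSphere (Q.erase x) E z s ∧ IsSmallestSphere (insert x Q) E z s) ∧
      ¬ SphereExists (Q.erase x) F ∧ ¬ SphereExists (insert x Q) F := by
  classical
  have hQne : Q.Nonempty := by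
    rcases Q.eq_empty_or_nonempty with rfl | h
    · exact absurd ⟨0, 0, le_rfl, fun q hq => absurd hq (Finset.notMem_empty q),
        fun f _ => by positivity⟩ hF
    · exact h
  obtain ⟨z, s, hs0, hincl, hexcl, hmin⟩ := ssp_exists_smallest Q E hQne hE
  obtain ⟨lam, mu, hlam, hmu, hdisj, hident⟩ := ssp_certificate Q F hQne hF
  have hsum := hident z s
  have hQnonpos : ∑ q ∈ Q, lam q * (dist z q ^ 2 - s) ≤ 0 :=
    Finset.sum_nonpos fun q hq =>
      mul_nonpos_iff.mpr (Or.inl ⟨hlam q, by linarith [hincl q hq]⟩)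
  have hFneg : ∑ f ∈ F, mu f * (dist z f ^ 2 - s) ≤ -1 := by linarith
  have hex : ∃ x ∈ F, 0 < mu x ∧ dist z x ^ 2 < s := by
    by_contra hno
    push_neg at hno
    have hge : (0:ℝ) ≤ ∑ f ∈ F, mu f * (dist z f ^ 2 - s) := by
      apply Finset.sum_nonneg
      intro f hf
      rcases eq_or_lt_of_le (hmu f) with h0 | hpos
      · rw [← h0, zero_mul]
      · exact mul_nonneg hpos.le (by linarith [hno f hf hpos])
    linarith
  obtain ⟨x, hxF, hmux, hxin⟩ := hex
  have hxE : x ∉ E := fun hxE => absurd hxin (not_lt.mpr (hexcl x hxE))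
  refine ⟨x, Finset.mem_sdiff.mpr ⟨hxF, hxE⟩, ⟨z, s, ?_, ?_⟩, ?_, ?_⟩
  · -- smallest sphere for Q.erase x
    refine ⟨hs0, fun q hq => hincl q (Finset.mem_of_mem_erase hq), hexcl, ?_⟩
    intro z' s' hs' hin' hex'
    by_cases hxQ : x ∈ Q
    swap
    · rw [Finset.erase_eq_of_notMem hxQ] at hin'
      exact hmin z' s' hs' hin' hex'
    by_contra hcon
    push_neg at hcon
    set g₀ : ℝ := dist z' x ^ 2 - s' with hg₀
    set g₁ : ℝ := dist z x ^ 2 - s with hg₁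
    have hg₁neg : g₁ < 0 := by rw [hg₁]; linarith
    set g₀p : ℝ := max g₀ 0 with hg₀p
    set t : ℝ := g₀p / (g₀p - g₁) with htdef
    have hg₀le : g₀ ≤ g₀p := le_max_left _ _
    have hg₀p0 : 0 ≤ g₀p := le_max_right _ _
    have hden : 0 < g₀p - g₁ := by linarith
    have ht0 : 0 ≤ t := div_nonneg hg₀p0 hden.le
    have ht1 : t < 1 := by
      rw [htdef, div_lt_one hden]
      linarith
    have htc : (1 - t) * g₀ + t * g₁ ≤ 0 := by
      have h1t : 1 - t = -g₁ / (g₀p - g₁) := by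
        rw [htdef]
        field_simp
        ring
      rw [h1t, htdef, div_mul_eq_mul_div, div_mul_eq_mul_div, ← add_div]
      have hnum : -g₁ * g₀ + g₀p * g₁ ≤ 0 := by nlinarith
      exact div_nonpos_iff.mpr (Or.inr ⟨hnum, hden.le⟩)
    set zt := (1 - t) • z' + t • z with hzt
    set st : ℝ := (1 - t) * s' + t * s - t * (1 - t) * dist z' z ^ 2 with hst
    have hkey : ∀ p : EuclideanSpace ℝ (Fin n), dist zt p ^ 2 - st
        = (1 - t) * (dist z' p ^ 2 - s') + t * (dist z p ^ 2 - s) :=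
      fun p => ssp_dist_sq_lerp' z' z p s' s t
    have hinQ : ∀ q ∈ Q, dist zt q ^ 2 ≤ st := by
      intro q hq
      by_cases hqx : q = x
      · subst hqx
        have hk := hkey q
        rw [← hg₀, ← hg₁] at hk
        linarith
      · have hq' : q ∈ Q.erase x := Finset.mem_erase.mpr ⟨hqx, hq⟩
        have hk := hkey q
        have h1 : dist z' q ^ 2 - s' ≤ 0 := by linarith [hin' q hq']
        have h2 : dist z q ^ 2 - s ≤ 0 := by linarith [hincl q hq]
        nlinarith
    have hexE : ∀ e ∈ E, st ≤ dist zt e ^ 2 := by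
      intro e he
      have hk := hkey e
      have h1 : 0 ≤ dist z' e ^ 2 - s' := by linarith [hex' e he]
      have h2 : 0 ≤ dist z e ^ 2 - s := by linarith [hexcl e he]
      nlinarith
    have hst0 : 0 ≤ st := le_trans (sq_nonneg (dist zt x)) (hinQ x hxQ)
    have hge := hmin zt st hst0 hinQ hexE
    have hd2 : 0 ≤ t * (1 - t) * dist z' z ^ 2 :=
      mul_nonneg (mul_nonneg ht0 (by linarith)) (sq_nonneg _)
    nlinarith
  · -- smallest sphere for insert x Q
    refine ⟨hs0, ?_, hexcl, ?_⟩
    · intro q hq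
      rcases Finset.mem_insert.mp hq with rfl | hq'
      · exact hxin.le
      · exact hincl q hq'
    · intro z' s' hs' hin' hex'
      exact hmin z' s' hs' (fun q hq => hin' q (Finset.mem_insert_of_mem hq)) hex'
  · -- no (Q.erase x, F) sphere
    rintro ⟨z'', s'', hs''0, hin'', hex''⟩
    have hid := hident z'' s''
    have hQle : ∑ q ∈ Q, lam q * (dist z'' q ^ 2 - s'') ≤ 0 := by
      apply Finset.sum_nonpos
      intro q hq
      by_cases hqx : q = x
      · subst hqx
        have hlz : lam q = 0 := by
          rcases hdisj q (Finset.mem_inter.mpr ⟨hq, hxF⟩) with h | h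
          · exact h
          · exact absurd h (ne_of_gt hmux)
        rw [hlz, zero_mul]
      · have hq' : q ∈ Q.erase x := Finset.mem_erase.mpr ⟨hqx, hq⟩
        exact mul_nonpos_iff.mpr (Or.inl ⟨hlam q, by linarith [hin'' q hq']⟩)
    have hFge : 0 ≤ ∑ f ∈ F, mu f * (dist z'' f ^ 2 - s'') :=
      Finset.sum_nonneg fun f hf => mul_nonneg (hmu f) (by linarith [hex'' f hf])
    linarith
  · -- no (insert x Q, F) sphere
    rintro ⟨z'', s'', hs''0, hin'', hex''⟩
    exact hF ⟨z'', s'', hs''0, fun q hq => hin'' q (Finset.mem_insert_of_mem hq), hex''⟩
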